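/- Let (L, ρ, τ) be a probabilistic metric space and let A, B be nonempty subsets of L. Then F_{AB} = F_{BA} and F_{AB} = F_{cl(A) cl(B)}, where cl denotes closure in the strong topology of L. -/

import Mathlib

/-- The modified Lévy distance between two functions `F G : ℝ → ℝ`:
the infimum of all `h > 0` such that for every `x ∈ (-1/h, 1/h)` the inequalities
`F (x - h) - h ≤ G x ≤ F (x + h) + h` and `G (x - h) - h ≤ F x ≤ G (x + h) + h` hold. -/
noncomputable def dL (F G : ℝ → ℝ) : ℝ :=
  sInf {h : ℝ | 0 < h ∧ ∀ x ∈ Set.Ioo (-h⁻¹) h⁻¹,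
    (F (x - h) - h ≤ G x ∧ G x ≤ F (x + h) + h) ∧
    (G (x - h) - h ≤ F x ∧ F x ≤ G (x + h) + h)}

/-- A distance distribution function: a nondecreasing, left-continuous function
`F : ℝ → [0,1]` with `F x = 0` for all `x ≤ 0`.  `Δ⁺` is the set of all such functions. -/
def IsDDF (F : ℝ → ℝ) : Prop :=
  Monotone F ∧ (∀ x : ℝ, ContinuousWithinAt F (Set.Iio x) x) ∧
    (∀ x : ℝ, F x ≤ 1) ∧ (∀ x : ℝ, x ≤ 0 → F x = 0)

/-- The distance distribution function `ε₀`. -/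
noncomputable def eps0 : ℝ → ℝ := fun x => if x ≤ 0 then 0 else 1

/-- A triangle function `τ` on `Δ⁺`: commutative, associative, nondecreasing in each
argument, continuous (sequentially, with respect to the modified Lévy metric `dL`,
which metrizes the topology of weak convergence), with identity `ε₀`. -/
structure IsTriangleFn (τ : (ℝ → ℝ) → (ℝ → ℝ) → (ℝ → ℝ)) : Prop where
  isDDF : ∀ F G, IsDDF F → IsDDF G → IsDDF (τ F G)
  comm : ∀ F G, IsDDF F → IsDDF G → τ F G = τ G F
  assoc : ∀ F G K, IsDDF F → IsDDF G → IsDDF K → τ (τ F G) K = τ F (τ G K)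
  mono : ∀ F₁ F₂ G₁ G₂, IsDDF F₁ → IsDDF F₂ → IsDDF G₁ → IsDDF G₂ →
    F₁ ≤ F₂ → G₁ ≤ G₂ → τ F₁ G₁ ≤ τ F₂ G₂
  ident : ∀ F, IsDDF F → τ F eps0 = F
  continuous : ∀ (Fn Gn : ℕ → ℝ → ℝ) (F G : ℝ → ℝ),
    (∀ n, IsDDF (Fn n)) → (∀ n, IsDDF (Gn n)) → IsDDF F → IsDDF G →
    Filter.Tendsto (fun n => dL (Fn n) F) Filter.atTop (nhds 0) →
    Filter.Tendsto (fun n => dL (Gn n) G) Filter.atTop (nhds 0) →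
    Filter.Tendsto (fun n => dL (τ (Fn n) (Gn n)) (τ F G)) Filter.atTop (nhds 0)

/-- A probabilistic metric space `(L, ρ, τ)`. -/
structure IsPMSpace {L : Type*} (ρ : L → L → ℝ → ℝ)
    (τ : (ℝ → ℝ) → (ℝ → ℝ) → (ℝ → ℝ)) : Prop where
  isDDF : ∀ p q, IsDDF (ρ p q)
  triangleFn : IsTriangleFn τ
  refl : ∀ p, ρ p p = eps0
  eq_of : ∀ p q, ρ p q = eps0 → p = q
  symm : ∀ p q, ρ p q = ρ q p
  tri_ineq : ∀ p q r, τ (ρ p q) (ρ q r) ≤ ρ p r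

/-- `τ` is sup-continuous: `τ (sup_i F_i) G = sup_i τ (F_i) G` pointwise, for every
(nonempty) family `{F_i} ⊆ Δ⁺` and every `G ∈ Δ⁺`. -/
def SupContinuous (τ : (ℝ → ℝ) → (ℝ → ℝ) → (ℝ → ℝ)) : Prop :=
  ∀ (ι : Type) [Nonempty ι] (Fi : ι → ℝ → ℝ) (G : ℝ → ℝ),
    (∀ i, IsDDF (Fi i)) → IsDDF G →
    ∀ x : ℝ, τ (fun y => ⨆ i, Fi i y) G x = ⨆ i, τ (Fi i) G x

/-- Condition (W): for all `F, G ∈ Δ⁺`, `x > 0` and real `α, β`,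
`F x > α` and `G x > β` imply `τ F G x > max (α + β - 1) 0`. -/
def CondW (τ : (ℝ → ℝ) → (ℝ → ℝ) → (ℝ → ℝ)) : Prop :=
  ∀ F G, IsDDF F → IsDDF G → ∀ x : ℝ, 0 < x → ∀ α β : ℝ,
    α < F x → β < G x → max (α + β - 1) 0 < τ F G x

/-- Convergence of a sequence in the strong topology of the PM space:
for every `t > 0`, eventually `F_{p_n p}(t) > 1 - t`. -/
def SConvSeq {L : Type*} (ρ : L → L → ℝ → ℝ) (pn : ℕ → L) (p : L) : Prop :=
  ∀ t : ℝ, 0 < t → ∃ n₀ : ℕ, ∀ n ≥ n₀, 1 - t < ρ (pn n) p t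

/-- Cauchy sequence in a PM space. -/
def SCauchySeq {L : Type*} (ρ : L → L → ℝ → ℝ) (pn : ℕ → L) : Prop :=
  ∀ t : ℝ, 0 < t → ∃ n₀ : ℕ, ∀ m ≥ n₀, ∀ n ≥ n₀, 1 - t < ρ (pn m) (pn n) t

/-- Completeness of a PM space: every Cauchy sequence converges in the strong topology. -/
def SComplete {L : Type*} (ρ : L → L → ℝ → ℝ) : Prop :=
  ∀ pn : ℕ → L, SCauchySeq ρ pn → ∃ p : L, SConvSeq ρ pn p

/-- The closure of a set in the strong topology of a PM space (the strong topology is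
metrizable, so the closure coincides with the sequential closure). -/
def SClosure {L : Type*} (ρ : L → L → ℝ → ℝ) (A : Set L) : Set L :=
  {q | ∃ pn : ℕ → L, (∀ n, pn n ∈ A) ∧ SConvSeq ρ pn q}

/-- A set closed in the strong topology of a PM space. -/
def SClosed {L : Type*} (ρ : L → L → ℝ → ℝ) (A : Set L) : Prop :=
  SClosure ρ A ⊆ A

/-- The probabilistic distance from a point to a set: `F_{pB}(x) = sup {F_{pq}(x) : q ∈ B}`. -/
noncomputable def probDistToSet {L : Type*} (ρ : L → L → ℝ → ℝ) (p : L) (B : Set L)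
    (x : ℝ) : ℝ :=
  sSup ((fun q => ρ p q x) '' B)

/-- `Γ*_{AB}(x) = inf {F_{pB}(x) : p ∈ A}`. -/
noncomputable def gammaStar {L : Type*} (ρ : L → L → ℝ → ℝ) (A B : Set L) (x : ℝ) : ℝ :=
  sInf ((fun p => probDistToSet ρ p B x) '' A)

/-- `F*_{AB}`, the left-continuous regularization of `Γ*_{AB}`:
`F*_{AB}(x) = sup_{x' < x} Γ*_{AB}(x')`. -/
noncomputable def fStar {L : Type*} (ρ : L → L → ℝ → ℝ) (A B : Set L) (x : ℝ) : ℝ :=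
  sSup (gammaStar ρ A B '' Set.Iio x)

/-- The probabilistic Pompeiu-Hausdorff distance:
`H(A,B)(x) = F_{AB}(x) = min (F*_{AB}(x)) (F*_{BA}(x))`. -/
noncomputable def probHaus {L : Type*} (ρ : L → L → ℝ → ℝ) (A B : Set L) (x : ℝ) : ℝ :=
  min (fStar ρ A B x) (fStar ρ B A x)

/-- Convergence of a sequence of sets with respect to the probabilistic
Pompeiu-Hausdorff metric `H`. -/
def HConv {L : Type*} (ρ : L → L → ℝ → ℝ) (An : ℕ → Set L) (A : Set L) : Prop :=
  ∀ t : ℝ, 0 < t → ∃ n₀ : ℕ, ∀ n ≥ n₀, 1 - t < probHaus ρ (An n) A t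

/-- Cauchy sequence of sets with respect to the probabilistic Pompeiu-Hausdorff metric `H`. -/
def HCauchy {L : Type*} (ρ : L → L → ℝ → ℝ) (An : ℕ → Set L) : Prop :=
  ∀ t : ℝ, 0 < t → ∃ n₀ : ℕ, ∀ m ≥ n₀, ∀ n ≥ n₀, 1 - t < probHaus ρ (An m) (An n) t


section Aux

open Filter Set

lemma IsDDF.nonneg {F : ℝ → ℝ} (h : IsDDF F) (x : ℝ) : 0 ≤ F x := by
  rcases le_or_gt x 0 with hx | hx
  · exact (h.2.2.2 x hx).ge
  · have := h.1 (le_of_lt hx)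
    rw [h.2.2.2 0 le_rfl] at this; exact this

lemma eps0_isDDF : IsDDF eps0 := by
  refine ⟨?_, ?_, ?_, ?_⟩
  · intro a b hab
    unfold eps0
    by_cases ha : a ≤ 0
    · by_cases hb : b ≤ 0 <;> simp [ha, hb]
    · have hb : ¬ b ≤ 0 := fun h => ha (hab.trans h)
      simp [ha, hb]
  · intro x
    rcases le_or_gt x 0 with hx | hx
    · have : ∀ y ∈ Set.Iio x, eps0 y = eps0 x := by
        intro y hy
        simp only [eps0]
        rw [if_pos (le_of_lt (lt_of_lt_of_le hy hx)), if_pos hx]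
      exact (continuousWithinAt_const (b := eps0 x)).congr this rfl
    · have hmem : Set.Ioo 0 x ∈ nhdsWithin x (Set.Iio x) := by
        apply mem_nhdsWithin.2
        exact ⟨Set.Ioi 0, isOpen_Ioi, hx, by
          intro y hy; exact ⟨hy.1, hy.2⟩⟩
      have : Filter.Tendsto eps0 (nhdsWithin x (Set.Iio x)) (nhds (eps0 x)) := by
        have heq : eps0 x = 1 := by simp [eps0, not_le.2 hx]
        rw [heq]
        apply Filter.Tendsto.congr' _ tendsto_const_nhds
        filter_upwards [hmem] with y hy
        simp [eps0, not_le.2 hy.1]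
      exact this
  · intro x; unfold eps0; split <;> norm_num
  · intro x hx; simp [eps0, hx]

/-- The defining set of `dL`. -/
def dLSet (F G : ℝ → ℝ) : Set ℝ :=
  {h : ℝ | 0 < h ∧ ∀ x ∈ Set.Ioo (-h⁻¹) h⁻¹,
    (F (x - h) - h ≤ G x ∧ G x ≤ F (x + h) + h) ∧
    (G (x - h) - h ≤ F x ∧ F x ≤ G (x + h) + h)}

lemma dL_eq (F G : ℝ → ℝ) : dL F G = sInf (dLSet F G) := rfl

lemma one_mem_dLSet {F G : ℝ → ℝ} (hF : IsDDF F) (hG : IsDDF G) : (1:ℝ) ∈ dLSet F G := by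
  refine ⟨one_pos, fun x _ => ?_⟩
  refine ⟨⟨?_, ?_⟩, ?_, ?_⟩
  · linarith [hF.2.2.1 (x - 1), hG.nonneg x]
  · linarith [hG.2.2.1 x, hF.nonneg (x + 1)]
  · linarith [hG.2.2.1 (x - 1), hF.nonneg x]
  · linarith [hF.2.2.1 x, hG.nonneg (x + 1)]

lemma dLSet_nonempty {F G : ℝ → ℝ} (hF : IsDDF F) (hG : IsDDF G) :
    (dLSet F G).Nonempty := ⟨1, one_mem_dLSet hF hG⟩

lemma dLSet_bddBelow (F G : ℝ → ℝ) : BddBelow (dLSet F G) :=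
  ⟨0, fun h hh => le_of_lt hh.1⟩

lemma dL_nonneg (F G : ℝ → ℝ) : 0 ≤ dL F G :=
  Real.sInf_nonneg (fun h hh => le_of_lt hh.1)

lemma dL_le_of_mem {F G : ℝ → ℝ} {t : ℝ} (ht : t ∈ dLSet F G) : dL F G ≤ t :=
  csInf_le (dLSet_bddBelow F G) ht

/-- If `dL F G < t` then the Lévy conditions hold at level `t`. -/
lemma dL_prop_of_lt {F G : ℝ → ℝ} (hF : IsDDF F) (hG : IsDDF G) {t : ℝ}
    (ht : dL F G < t) :
    ∀ x : ℝ, |x| < t⁻¹ →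
      (F (x - t) - t ≤ G x ∧ G x ≤ F (x + t) + t) ∧
      (G (x - t) - t ≤ F x ∧ F x ≤ G (x + t) + t) := by
  obtain ⟨s, hs, hst⟩ := (csInf_lt_iff (dLSet_bddBelow F G) (dLSet_nonempty hF hG)).1 ht
  intro x hx
  have ht0 : 0 < t := lt_trans hs.1 hst
  have hxs : x ∈ Set.Ioo (-s⁻¹) s⁻¹ := by
    have h1 : t⁻¹ ≤ s⁻¹ := (inv_anti₀ hs.1 hst.le)
    rw [abs_lt] at hx
    constructor <;> [linarith; linarith]
  obtain ⟨⟨h1, h2⟩, h3, h4⟩ := hs.2 x hxs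
  have hst' : s ≤ t := hst.le
  refine ⟨⟨?_, ?_⟩, ?_, ?_⟩
  · calc F (x - t) - t ≤ F (x - s) - s := by
          have := hF.1 (show x - t ≤ x - s by linarith); linarith
      _ ≤ G x := h1
  · exact h2.trans (by have := hF.1 (show x + s ≤ x + t by linarith); linarith)
  · calc G (x - t) - t ≤ G (x - s) - s := by
          have := hG.1 (show x - t ≤ x - s by linarith); linarith
      _ ≤ F x := h3
  · exact h4.trans (by have := hG.1 (show x + s ≤ x + t by linarith); linarith)

/-- If `G δ > 1 - δ` then `dL G eps0 ≤ δ`. -/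
lemma dL_eps0_le {G : ℝ → ℝ} (hG : IsDDF G) {δ : ℝ} (hδ : 0 < δ)
    (h : 1 - δ < G δ) : dL G eps0 ≤ δ := by
  have hmem : ∀ t : ℝ, δ < t → t ∈ dLSet G eps0 := by
    intro t hδt
    have ht : 0 < t := hδ.trans hδt
    refine ⟨ht, fun x _ => ?_⟩
    have hGle : ∀ y, G y ≤ 1 := hG.2.2.1
    have hGnn : ∀ y, 0 ≤ G y := hG.nonneg
    refine ⟨⟨?_, ?_⟩, ?_, ?_⟩
    · -- G (x - t) - t ≤ eps0 x
      rcases le_or_gt x 0 with hx | hx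
      · rw [hG.2.2.2 (x - t) (by linarith)]
        simp [eps0, hx]; linarith
      · have : eps0 x = 1 := by simp [eps0, not_le.2 hx]
        rw [this]; linarith [hGle (x - t)]
    · -- eps0 x ≤ G (x + t) + t
      rcases le_or_gt x 0 with hx | hx
      · simp only [eps0, if_pos hx]; linarith [hGnn (x + t)]
      · have : eps0 x = 1 := by simp [eps0, not_le.2 hx]
        rw [this]
        have : G δ ≤ G (x + t) := hG.1 (by linarith)
        linarith
    · -- eps0 (x - t) - t ≤ G x
      rcases le_or_gt (x - t) 0 with hx | hx
      · simp only [eps0, if_pos hx]; linarith [hGnn x]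
      · have : eps0 (x - t) = 1 := by simp [eps0, not_le.2 hx]
        rw [this]
        have : G δ ≤ G x := hG.1 (by linarith)
        linarith
    · -- G x ≤ eps0 (x + t) + t
      rcases le_or_gt (x + t) 0 with hx | hx
      · rw [hG.2.2.2 x (by linarith)]
        simp only [eps0, if_pos hx]; linarith
      · have : eps0 (x + t) = 1 := by simp [eps0, not_le.2 hx]
        rw [this]; linarith [hGle x]
  -- conclude sInf ≤ δ
  by_contra hcon
  push_neg at hcon
  have hmid : (δ + dL G eps0) / 2 ∈ dLSet G eps0 := hmem _ (by linarith)
  have := dL_le_of_mem hmid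
  linarith


lemma tendsto_zero_of_forall_lt {u : ℕ → ℝ} (hnn : ∀ n, 0 ≤ u n)
    (h : ∀ ε : ℝ, 0 < ε → ∃ N, ∀ n ≥ N, u n < ε) :
    Filter.Tendsto u Filter.atTop (nhds 0) := by
  rw [Metric.tendsto_atTop]
  intro ε hε
  obtain ⟨N, hN⟩ := h ε hε
  exact ⟨N, fun n hn => by
    rw [Real.dist_eq, sub_zero, abs_of_nonneg (hnn n)]; exact hN n hn⟩

/-- Helly selection theorem: every sequence of distance distribution functions has a
subsequence converging in the modified Lévy metric to a distance distribution function. -/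
lemma helly_selection (Kn : ℕ → ℝ → ℝ) (hK : ∀ n, IsDDF (Kn n)) :
    ∃ φ : ℕ → ℕ, StrictMono φ ∧ ∃ K : ℝ → ℝ, IsDDF K ∧
      Filter.Tendsto (fun n => dL (Kn (φ n)) K) Filter.atTop (nhds 0) := by
  haveI : CompactSpace (Set.Icc (0:ℝ) 1) := isCompact_iff_compactSpace.1 isCompact_Icc
  have hmem : ∀ (n : ℕ) (q : ℚ), Kn n (q:ℝ) ∈ Set.Icc (0:ℝ) 1 :=
    fun n q => ⟨(hK n).nonneg _, (hK n).2.2.1 _⟩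
  set u : ℕ → (ℚ → Set.Icc (0:ℝ) 1) := fun n q => ⟨Kn n (q:ℝ), hmem n q⟩ with hu
  obtain ⟨g, -, φ, hφ, hconv⟩ :=
    (isCompact_univ (X := ℚ → Set.Icc (0:ℝ) 1)).tendsto_subseq
      (x := u) (fun n => Set.mem_univ _)
  set hq : ℚ → ℝ := fun q => (g q : ℝ) with hhq
  have hpt : ∀ q : ℚ, Filter.Tendsto (fun n => Kn (φ n) (q:ℝ)) Filter.atTop (nhds (hq q)) := by
    intro q
    have h1 : Filter.Tendsto (fun n => (u (φ n)) q) Filter.atTop (nhds (g q)) :=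
      ((continuous_apply q).tendsto g).comp hconv
    exact (continuous_subtype_val.tendsto (g q)).comp h1
  have hq01 : ∀ q : ℚ, 0 ≤ hq q ∧ hq q ≤ 1 := fun q => ⟨(g q).2.1, (g q).2.2⟩
  have hqmono : ∀ q r : ℚ, q ≤ r → hq q ≤ hq r := by
    intro q r hqr
    exact le_of_tendsto_of_tendsto (hpt q) (hpt r)
      (Filter.Eventually.of_forall fun n => (hK _).1 (by exact_mod_cast hqr))
  have hq0 : ∀ q : ℚ, (q:ℝ) ≤ 0 → hq q = 0 := by
    intro q hqle
    refine tendsto_nhds_unique (hpt q) ?_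
    have : (fun n => Kn (φ n) (q:ℝ)) = fun _ => (0:ℝ) := by
      funext n; exact (hK _).2.2.2 _ hqle
    rw [this]; exact tendsto_const_nhds
  set K : ℝ → ℝ := fun x => sSup (hq '' {q : ℚ | (q:ℝ) < x}) with hKdef
  have hsetne : ∀ x : ℝ, (hq '' {q : ℚ | (q:ℝ) < x}).Nonempty := by
    intro x
    obtain ⟨q, hq'⟩ := exists_rat_lt x
    exact ⟨hq q, ⟨q, hq', rfl⟩⟩
  have hsetbdd : ∀ x : ℝ, BddAbove (hq '' {q : ℚ | (q:ℝ) < x}) := by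
    intro x
    exact ⟨1, by rintro y ⟨q, -, rfl⟩; exact (hq01 q).2⟩
  have hKle : ∀ (q : ℚ) (x : ℝ), (q:ℝ) < x → hq q ≤ K x :=
    fun q x h => le_csSup (hsetbdd x) ⟨q, h, rfl⟩
  have hKge : ∀ (q : ℚ) (x : ℝ), x ≤ (q:ℝ) → K x ≤ hq q := by
    intro q x h
    refine csSup_le (hsetne x) ?_
    rintro y ⟨r, hr, rfl⟩
    exact hqmono r q (by exact_mod_cast le_of_lt (lt_of_lt_of_le hr h))
  have hKmono : Monotone K := by
    intro a b hab
    exact csSup_le_csSup (hsetbdd b) (hsetne a)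
      (Set.image_mono (fun q hq' => lt_of_lt_of_le hq' hab))
  have hKnn : ∀ x, 0 ≤ K x := by
    intro x
    obtain ⟨q, hq'⟩ := exists_rat_lt x
    exact le_trans (hq01 q).1 (hKle q x hq')
  have hK1 : ∀ x, K x ≤ 1 := by
    intro x
    refine csSup_le (hsetne x) ?_
    rintro y ⟨q, -, rfl⟩; exact (hq01 q).2
  have hK0 : ∀ x : ℝ, x ≤ 0 → K x = 0 := by
    intro x hx
    refine le_antisymm (csSup_le (hsetne x) ?_) (hKnn x)
    rintro y ⟨q, hq', rfl⟩
    exact (hq0 q (le_of_lt (lt_of_lt_of_le hq' hx))).le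
  have hKlc : ∀ x : ℝ, ContinuousWithinAt K (Set.Iio x) x := by
    intro x
    have h1 := hKmono.tendsto_nhdsLT x
    have h2 : sSup (K '' Set.Iio x) = K x := by
      refine le_antisymm (csSup_le ((Set.nonempty_Iio).image K)
        (by rintro y ⟨x', hx', rfl⟩; exact hKmono hx'.le)) ?_
      refine csSup_le (hsetne x) ?_
      rintro y ⟨q, hq', rfl⟩
      have hmid : ((q:ℝ) + x) / 2 ∈ Set.Iio x := by
        simp only [Set.mem_Iio, Set.mem_setOf_eq] at hq' ⊢; linarith
      refine le_trans (hKle q (((q:ℝ) + x) / 2) (by simp only [Set.mem_setOf_eq] at hq'; linarith)) ?_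
      exact le_csSup (hKmono.map_bddAbove bddAbove_Iio) ⟨((q:ℝ) + x) / 2, hmid, rfl⟩
    rw [h2] at h1
    exact h1
  refine ⟨φ, hφ, K, ⟨hKmono, hKlc, hK1, hK0⟩, ?_⟩
  refine tendsto_zero_of_forall_lt (fun n => dL_nonneg _ _) ?_
  intro ε hε
  set e : ℝ := min ε 1 / 2 with he
  have he0 : 0 < e := by
    have : 0 < min ε 1 := lt_min hε one_pos
    positivity
  have heε : e < ε := by
    have h1 : min ε 1 ≤ ε := min_le_left _ _
    simp only [he]; linarith
  have he1 : e ≤ 1 / 2 := by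
    have h1 : min ε 1 ≤ 1 := min_le_right _ _
    simp only [he]; linarith
  have hei : 2 ≤ e⁻¹ := by
    rw [le_inv_comm₀ two_pos he0]; linarith
  obtain ⟨q0, hq0lt⟩ := exists_rat_lt (-(e⁻¹) - 2)
  obtain ⟨s, hs0, hse⟩ : ∃ s : ℚ, 0 < s ∧ (s:ℝ) < e := by
    obtain ⟨s, h1, h2⟩ := exists_rat_btwn he0
    exact ⟨s, by exact_mod_cast h1, h2⟩
  have hs0' : (0:ℝ) < (s:ℝ) := by exact_mod_cast hs0
  obtain ⟨m, hm⟩ : ∃ m : ℕ, e⁻¹ + 2 < (q0:ℝ) + m * s := by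
    obtain ⟨m, hm⟩ := exists_nat_gt ((e⁻¹ + 2 - q0) / s)
    refine ⟨m, ?_⟩
    rw [div_lt_iff₀ hs0'] at hm
    linarith
  have grid : ∀ a : ℝ, (q0:ℝ) ≤ a → a + s ≤ (q0:ℝ) + m * s →
      ∃ i : ℕ, i ≤ m ∧ a ≤ (q0:ℝ) + i * s ∧ (q0:ℝ) + i * s < a + s := by
    intro a ha ham
    set i := ⌈(a - q0) / s⌉₊ with hi
    have h1 : (a - q0) / s ≤ i := Nat.le_ceil _
    have h2 : (i:ℝ) < (a - q0) / s + 1 :=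
      Nat.ceil_lt_add_one (div_nonneg (by linarith) hs0'.le)
    have hge : a ≤ (q0:ℝ) + i * s := by
      rw [div_le_iff₀ hs0'] at h1; linarith
    have hlt : (q0:ℝ) + i * s < a + s := by
      have h3 := mul_lt_mul_of_pos_right h2 hs0'
      rw [add_mul, div_mul_cancel₀ _ (ne_of_gt hs0'), one_mul] at h3
      linarith
    refine ⟨i, ?_, hge, hlt⟩
    by_contra hc
    push_neg at hc
    have h4 : (m:ℝ) + 1 ≤ (i:ℝ) := by exact_mod_cast hc
    have h5 : (i:ℝ) * s < (m:ℝ) * s := by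
      have := lt_of_lt_of_le hlt ham; linarith
    have h6 : (i:ℝ) < (m:ℝ) := (mul_lt_mul_iff_left₀ hs0').1 h5
    linarith
  set r : ℕ → ℚ := fun i => q0 + (i:ℚ) * s with hr
  have hrcast : ∀ i : ℕ, ((r i : ℚ) : ℝ) = (q0:ℝ) + (i:ℝ) * s := by
    intro i; push_cast [hr]; ring
  have hclose : ∀ᶠ n in Filter.atTop,
      ∀ i ∈ Finset.range (m + 1), |Kn (φ n) ((r i : ℚ) : ℝ) - hq (r i)| < e := by
    rw [Filter.eventually_all_finset]
    intro i _
    have := (hpt (r i))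
    rw [Metric.tendsto_atTop] at this
    obtain ⟨N, hN⟩ := this e he0
    rw [Filter.eventually_atTop]
    exact ⟨N, fun n hn => by
      have := hN n hn
      rwa [Real.dist_eq] at this⟩
  rw [Filter.eventually_atTop] at hclose
  obtain ⟨N, hN⟩ := hclose
  refine ⟨N, fun n hn => ?_⟩
  have hcl : ∀ i : ℕ, i ≤ m → |Kn (φ n) ((r i : ℚ) : ℝ) - hq (r i)| < e :=
    fun i hi => hN n hn i (Finset.mem_range.2 (Nat.lt_succ_of_le hi))
  have hmem' : e ∈ dLSet (Kn (φ n)) K := by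
    refine ⟨he0, ?_⟩
    intro x hx
    obtain ⟨hx1, hx2⟩ := hx
    set Fn := Kn (φ n) with hFn
    have hFmono : Monotone Fn := (hK _).1
    -- grid point near x - e
    obtain ⟨i, him, hi1, hi2⟩ := grid (x - e) (by linarith) (by linarith)
    -- grid point near x
    obtain ⟨j, hjm, hj1, hj2⟩ := grid x (by linarith) (by linarith)
    have hci := hcl i him
    have hcj := hcl j hjm
    rw [hrcast i, abs_lt] at hci
    rw [hrcast j, abs_lt] at hcj
    have hri : ((r i : ℚ) : ℝ) = (q0:ℝ) + i * s := hrcast i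
    have hrj : ((r j : ℚ) : ℝ) = (q0:ℝ) + j * s := hrcast j
    refine ⟨⟨?_, ?_⟩, ?_, ?_⟩
    · -- Fn (x - e) - e ≤ K x
      have h1 : Fn (x - e) ≤ Fn ((q0:ℝ) + i * s) := hFmono hi1
      have h2 : hq (r i) ≤ K x := hKle (r i) x (by rw [hri]; linarith)
      linarith
    · -- K x ≤ Fn (x + e) + e
      have h1 : K x ≤ hq (r j) := hKge (r j) x (by rw [hrj]; linarith)
      have h2 : Fn ((q0:ℝ) + j * s) ≤ Fn (x + e) := hFmono (by linarith)
      linarith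
    · -- K (x - e) - e ≤ Fn x
      have h1 : K (x - e) ≤ hq (r i) := hKge (r i) (x - e) (by rw [hri]; linarith)
      have h2 : Fn ((q0:ℝ) + i * s) ≤ Fn x := hFmono (by linarith)
      linarith
    · -- Fn x ≤ K (x + e) + e
      have h1 : Fn x ≤ Fn ((q0:ℝ) + j * s) := hFmono hj1
      have h2 : hq (r j) ≤ K (x + e) := hKle (r j) (x + e) (by rw [hrj]; linarith)
      linarith
  exact lt_of_le_of_lt (dL_le_of_mem hmem') heε

end Aux

/-- Uniform version of continuity of `τ` at `(ε₀, ·)` (for `ε ≤ 1`). -/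
lemma unif_aux {τ : (ℝ → ℝ) → (ℝ → ℝ) → (ℝ → ℝ)} (hτ : IsTriangleFn τ)
    {ε : ℝ} (hε : 0 < ε) (hε1 : ε ≤ 1) :
    ∃ δ : ℝ, 0 < δ ∧ ∀ G K : ℝ → ℝ, IsDDF G → IsDDF K → 1 - δ < G δ →
      ∀ x : ℝ, |x| < ε⁻¹ → K (x - ε) - ε ≤ τ G K x := by
  by_contra hcon
  push_neg at hcon
  have hstep : ∀ n : ℕ, ∃ G K : ℝ → ℝ, IsDDF G ∧ IsDDF K ∧
      1 - ((n:ℝ) + 1)⁻¹ < G (((n:ℝ) + 1)⁻¹) ∧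
      ∃ x : ℝ, |x| < ε⁻¹ ∧ τ G K x < K (x - ε) - ε := by
    intro n
    obtain ⟨G, K, hG, hK, hGδ, x, hx, hlt⟩ := hcon (((n:ℝ) + 1)⁻¹)
      (by positivity)
    exact ⟨G, K, hG, hK, hGδ, x, hx, hlt⟩
  choose Gn Kn hGn hKn hGδ xn hxn hlt using hstep
  obtain ⟨φ, hφ, K, hKddf, hdLK⟩ := helly_selection Kn hKn
  have hGconv : Filter.Tendsto (fun n => dL (Gn (φ n)) eps0) Filter.atTop (nhds 0) := by
    have hb : ∀ n : ℕ, dL (Gn (φ n)) eps0 ≤ ((n:ℝ) + 1)⁻¹ := by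
      intro n
      have h1 : dL (Gn (φ n)) eps0 ≤ (((φ n):ℝ) + 1)⁻¹ :=
        dL_eps0_le (hGn (φ n)) (by positivity) (hGδ (φ n))
      refine h1.trans ?_
      have hφn : n ≤ φ n := hφ.le_apply
      have : (n:ℝ) + 1 ≤ ((φ n):ℝ) + 1 := by
        have : (n:ℝ) ≤ ((φ n):ℝ) := by exact_mod_cast hφn
        linarith
      exact inv_anti₀ (by positivity) this
    refine squeeze_zero (fun n => dL_nonneg _ _) hb ?_
    exact tendsto_one_div_add_atTop_nhds_zero_nat.congr (by intro n; rw [one_div])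
  have hτconv : Filter.Tendsto (fun n => dL (τ (Gn (φ n)) (Kn (φ n))) K)
      Filter.atTop (nhds 0) := by
    have h1 := hτ.continuous (fun n => Gn (φ n)) (fun n => Kn (φ n)) eps0 K
      (fun n => hGn (φ n)) (fun n => hKn (φ n)) eps0_isDDF hKddf hGconv hdLK
    rwa [hτ.comm eps0 K eps0_isDDF hKddf, hτ.ident K hKddf] at h1
  -- get N with both distances < ε/3
  have hε3 : 0 < ε / 3 := by linarith
  have h1 := hτconv.eventually_lt_const hε3
  have h2 := hdLK.eventually_lt_const hε3
  obtain ⟨N, hN⟩ := ((h1.and h2).and (Filter.Eventually.of_forall (fun n : ℕ => True.intro))).exists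
  obtain ⟨⟨hd1, hd2⟩, -⟩ := hN
  set t : ℝ := ε / 3 with htdef
  set x := xn (φ N) with hxdef
  have hxb : |x| < ε⁻¹ := hxn (φ N)
  have hti : (3:ℝ) / ε = t⁻¹ := by rw [htdef]; field_simp
  have hεinv : ε⁻¹ ≤ 3 / ε := by
    rw [div_eq_mul_inv]; nlinarith [inv_pos.2 hε]
  have hεinv2 : (1:ℝ) ≤ ε⁻¹ := by
    rw [le_inv_comm₀ one_pos hε]; linarith
  -- property of (τ G K, K) at x
  have hp1 := dL_prop_of_lt (hτ.isDDF _ _ (hGn (φ N)) (hKn (φ N))) hKddf hd1 x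
    (by rw [← hti]; exact lt_of_lt_of_le hxb hεinv)
  -- property of (Kn (φ N), K) at x - t
  have hp2 := dL_prop_of_lt (hKn (φ N)) hKddf hd2 (x - t)
    (by
      rw [← hti]
      rw [abs_lt] at hxb ⊢
      constructor
      · have : -(3 / ε) ≤ -ε⁻¹ - t := by
          rw [htdef]
          have : ε⁻¹ + ε / 3 ≤ 3 / ε := by
            rw [div_eq_mul_inv 3 ε]
            nlinarith [inv_pos.2 hε]
          linarith
        linarith [hxb.1]
      · have ht0 : 0 < t := hε3
        calc x - t < ε⁻¹ := by linarith [hxb.2]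
          _ ≤ 3 / ε := hεinv)
  have key1 : K (x - t) - t ≤ τ (Gn (φ N)) (Kn (φ N)) x := hp1.2.1
  have key2 : Kn (φ N) (x - t - t) - t ≤ K (x - t) := hp2.1.1
  have key3 : Kn (φ N) (x - ε) ≤ Kn (φ N) (x - t - t) :=
    (hKn (φ N)).1 (by rw [htdef]; linarith)
  have := hlt (φ N)
  rw [← hxdef] at this
  have ht3 : t + t ≤ ε := by rw [htdef]; linarith
  linarith

/-- Uniform continuity of `τ` at `(ε₀, ·)`. -/
lemma unif {τ : (ℝ → ℝ) → (ℝ → ℝ) → (ℝ → ℝ)} (hτ : IsTriangleFn τ)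
    {ε : ℝ} (hε : 0 < ε) :
    ∃ δ : ℝ, 0 < δ ∧ ∀ G K : ℝ → ℝ, IsDDF G → IsDDF K → 1 - δ < G δ →
      ∀ x : ℝ, |x| < ε⁻¹ → K (x - ε) - ε ≤ τ G K x := by
  set ε' := min ε 1 with hε'
  have hε'0 : 0 < ε' := lt_min hε one_pos
  have hε'1 : ε' ≤ 1 := min_le_right _ _
  have hε'ε : ε' ≤ ε := min_le_left _ _
  obtain ⟨δ, hδ0, hδ⟩ := unif_aux hτ hε'0 hε'1
  refine ⟨δ, hδ0, ?_⟩
  intro G K hG hK hGδ x hx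
  have hx' : |x| < ε'⁻¹ := lt_of_lt_of_le hx (inv_anti₀ hε'0 hε'ε)
  have h1 := hδ G K hG hK hGδ x hx'
  have h2 : K (x - ε) ≤ K (x - ε') := hK.1 (by linarith)
  linarith




section PMAux

variable {L : Type*} {ρ : L → L → ℝ → ℝ} {τ : (ℝ → ℝ) → (ℝ → ℝ) → (ℝ → ℝ)}

lemma probDist_bddAbove (hPM : IsPMSpace ρ τ) (p : L) (B : Set L) (x : ℝ) :
    BddAbove ((fun q => ρ p q x) '' B) :=
  ⟨1, by rintro y ⟨q, -, rfl⟩; exact (hPM.isDDF p q).2.2.1 x⟩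

lemma le_probDist (hPM : IsPMSpace ρ τ) {p q : L} {B : Set L} (hq : q ∈ B) (x : ℝ) :
    ρ p q x ≤ probDistToSet ρ p B x :=
  le_csSup (probDist_bddAbove hPM p B x) ⟨q, hq, rfl⟩

lemma probDist_le (hPM : IsPMSpace ρ τ) {p : L} {B : Set L} (hB : B.Nonempty) {x : ℝ}
    {c : ℝ} (h : ∀ q ∈ B, ρ p q x ≤ c) : probDistToSet ρ p B x ≤ c :=
  csSup_le (hB.image _) (by rintro y ⟨q, hq, rfl⟩; exact h q hq)

lemma probDist_nonneg (hPM : IsPMSpace ρ τ) (p : L) {B : Set L} (hB : B.Nonempty) (x : ℝ) :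
    0 ≤ probDistToSet ρ p B x := by
  obtain ⟨q, hq⟩ := hB
  exact le_trans ((hPM.isDDF p q).nonneg x) (le_probDist hPM hq x)

lemma probDist_le_one (hPM : IsPMSpace ρ τ) (p : L) {B : Set L} (hB : B.Nonempty) (x : ℝ) :
    probDistToSet ρ p B x ≤ 1 :=
  probDist_le hPM hB (fun q _ => (hPM.isDDF p q).2.2.1 x)

lemma probDist_mono_x (hPM : IsPMSpace ρ τ) (p : L) {B : Set L} (hB : B.Nonempty)
    {x y : ℝ} (hxy : x ≤ y) : probDistToSet ρ p B x ≤ probDistToSet ρ p B y :=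
  probDist_le hPM hB (fun q hq => le_trans ((hPM.isDDF p q).1 hxy) (le_probDist hPM hq y))

lemma probDist_mono_set (hPM : IsPMSpace ρ τ) (p : L) {B B' : Set L} (hB : B.Nonempty)
    (hBB : B ⊆ B') (x : ℝ) : probDistToSet ρ p B x ≤ probDistToSet ρ p B' x :=
  probDist_le hPM hB (fun q hq => le_probDist hPM (hBB hq) x)

lemma probDist_zero (hPM : IsPMSpace ρ τ) (p : L) {B : Set L} (hB : B.Nonempty) {x : ℝ}
    (hx : x ≤ 0) : probDistToSet ρ p B x = 0 :=
  le_antisymm (probDist_le hPM hB (fun q _ => ((hPM.isDDF p q).2.2.2 x hx).le))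
    (probDist_nonneg hPM p hB x)

lemma gammaStar_le' (hPM : IsPMSpace ρ τ) {A B : Set L} (hB : B.Nonempty) {p : L}
    (hp : p ∈ A) (x : ℝ) : gammaStar ρ A B x ≤ probDistToSet ρ p B x :=
  csInf_le ⟨0, by rintro y ⟨r, hr, rfl⟩; exact probDist_nonneg hPM r hB x⟩ ⟨p, hp, rfl⟩

lemma le_gammaStar (hPM : IsPMSpace ρ τ) {A : Set L} (B : Set L) (hA : A.Nonempty)
    {x : ℝ} {c : ℝ} (h : ∀ p ∈ A, c ≤ probDistToSet ρ p B x) : c ≤ gammaStar ρ A B x :=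
  le_csInf (hA.image _) (by rintro y ⟨p, hp, rfl⟩; exact h p hp)

lemma gammaStar_nonneg (hPM : IsPMSpace ρ τ) {A B : Set L} (hA : A.Nonempty)
    (hB : B.Nonempty) (x : ℝ) : 0 ≤ gammaStar ρ A B x :=
  le_gammaStar hPM B hA (fun p _ => probDist_nonneg hPM p hB x)

lemma gammaStar_le_one (hPM : IsPMSpace ρ τ) {A B : Set L} (hA : A.Nonempty)
    (hB : B.Nonempty) (x : ℝ) : gammaStar ρ A B x ≤ 1 := by
  obtain ⟨p, hp⟩ := hA
  exact le_trans (gammaStar_le' hPM hB hp x) (probDist_le_one hPM p hB x)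

lemma gammaStar_mono_x (hPM : IsPMSpace ρ τ) {A B : Set L} (hA : A.Nonempty)
    (hB : B.Nonempty) {x y : ℝ} (hxy : x ≤ y) :
    gammaStar ρ A B x ≤ gammaStar ρ A B y :=
  le_gammaStar hPM B hA (fun p hp =>
    le_trans (gammaStar_le' hPM hB hp x) (probDist_mono_x hPM p hB hxy))

lemma le_fStar (hPM : IsPMSpace ρ τ) {A B : Set L} (hA : A.Nonempty) (hB : B.Nonempty)
    {x' x : ℝ} (hxx : x' < x) : gammaStar ρ A B x' ≤ fStar ρ A B x :=
  le_csSup ⟨1, by rintro y ⟨z, hz, rfl⟩; exact gammaStar_le_one hPM hA hB z⟩ ⟨x', hxx, rfl⟩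

lemma fStar_le (hPM : IsPMSpace ρ τ) {A B : Set L} {x : ℝ} {c : ℝ}
    (h : ∀ x' < x, gammaStar ρ A B x' ≤ c) : fStar ρ A B x ≤ c :=
  csSup_le (Set.nonempty_Iio.image _) (by rintro y ⟨x', hx', rfl⟩; exact h x' hx')

lemma subset_SClosure (hPM : IsPMSpace ρ τ) (A : Set L) : A ⊆ SClosure ρ A := by
  intro p hp
  refine ⟨fun _ => p, fun _ => hp, ?_⟩
  intro t ht
  refine ⟨0, fun n _ => ?_⟩
  rw [hPM.refl p]
  simp only [eps0, if_neg (not_le.2 ht)]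
  linarith

lemma SClosure_nonempty (hPM : IsPMSpace ρ τ) {A : Set L} (hA : A.Nonempty) :
    (SClosure ρ A).Nonempty := hA.mono (subset_SClosure hPM A)

/-- Key lemma: the point-to-set distance is essentially unchanged by closing the set. -/
lemma probDist_SClosure_le (hPM : IsPMSpace ρ τ) {B : Set L} (hB : B.Nonempty) (p : L)
    {x' x : ℝ} (hxx : x' < x) :
    probDistToSet ρ p (SClosure ρ B) x' ≤ probDistToSet ρ p B x := by
  refine probDist_le hPM (SClosure_nonempty hPM hB) ?_
  intro q hq
  rcases le_or_gt x' 0 with hx0 | hx0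
  · rw [(hPM.isDDF p q).2.2.2 x' hx0]
    exact probDist_nonneg hPM p hB x
  · have hx : 0 < x := lt_trans hx0 hxx
    refine le_of_forall_pos_le_add ?_
    intro ε hε0
    set ε₁ : ℝ := min ε (min (x - x') ((|x| + 1)⁻¹)) with hε₁def
    have hε₁0 : 0 < ε₁ := by
      refine lt_min hε0 (lt_min (by linarith) ?_)
      positivity
    have hε₁ε : ε₁ ≤ ε := min_le_left _ _
    have hε₁x : ε₁ ≤ x - x' := le_trans (min_le_right _ _) (min_le_left _ _)
    have hε₁inv : |x| < ε₁⁻¹ := by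
      have h1 : ε₁ ≤ (|x| + 1)⁻¹ := le_trans (min_le_right _ _) (min_le_right _ _)
      have h2 : (|x| + 1)⁻¹⁻¹ ≤ ε₁⁻¹ := inv_anti₀ hε₁0 h1
      rw [inv_inv] at h2
      linarith
    obtain ⟨δ, hδ0, hδ⟩ := unif hPM.triangleFn hε₁0
    obtain ⟨qn, hqnB, hconv⟩ := hq
    obtain ⟨n₀, hn₀⟩ := hconv δ hδ0
    have hGδ : 1 - δ < ρ q (qn n₀) δ := by
      rw [hPM.symm q (qn n₀)]; exact hn₀ n₀ le_rfl
    have hU := hδ (ρ q (qn n₀)) (ρ p q) (hPM.isDDF q (qn n₀)) (hPM.isDDF p q) hGδ x hε₁inv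
    have htri : τ (ρ q (qn n₀)) (ρ p q) x ≤ ρ p (qn n₀) x := by
      rw [hPM.triangleFn.comm (ρ q (qn n₀)) (ρ p q) (hPM.isDDF q (qn n₀)) (hPM.isDDF p q)]
      exact hPM.tri_ineq p q (qn n₀) x
    have hmono : ρ p q x' ≤ ρ p q (x - ε₁) := (hPM.isDDF p q).1 (by linarith)
    have hle : ρ p (qn n₀) x ≤ probDistToSet ρ p B x := le_probDist hPM (hqnB n₀) x
    linarith

/-- Key lemma: closing the first set does not decrease `Γ*`, up to regularization. -/
lemma gammaStar_le_probDist_SClosure (hPM : IsPMSpace ρ τ) {A B' : Set L}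
    (hA : A.Nonempty) (hB' : B'.Nonempty) {x' x : ℝ} (hxx : x' < x) {p : L}
    (hp : p ∈ SClosure ρ A) : gammaStar ρ A B' x' ≤ probDistToSet ρ p B' x := by
  rcases le_or_gt x' 0 with hx0 | hx0
  · obtain ⟨p₀, hp₀⟩ := hA
    calc gammaStar ρ A B' x' ≤ probDistToSet ρ p₀ B' x' := gammaStar_le' hPM hB' hp₀ x'
      _ = 0 := probDist_zero hPM p₀ hB' hx0
      _ ≤ probDistToSet ρ p B' x := probDist_nonneg hPM p hB' x
  · have hx : 0 < x := lt_trans hx0 hxx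
    refine le_of_forall_pos_le_add ?_
    intro ε hε0
    set ε₁ : ℝ := min ε (min (x - x') ((|x| + 1)⁻¹)) with hε₁def
    have hε₁0 : 0 < ε₁ := by
      refine lt_min hε0 (lt_min (by linarith) ?_)
      positivity
    have hε₁ε : ε₁ ≤ ε := min_le_left _ _
    have hε₁x : ε₁ ≤ x - x' := le_trans (min_le_right _ _) (min_le_left _ _)
    have hε₁inv : |x| < ε₁⁻¹ := by
      have h1 : ε₁ ≤ (|x| + 1)⁻¹ := le_trans (min_le_right _ _) (min_le_right _ _)
      have h2 : (|x| + 1)⁻¹⁻¹ ≤ ε₁⁻¹ := inv_anti₀ hε₁0 h1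
      rw [inv_inv] at h2
      linarith
    obtain ⟨δ, hδ0, hδ⟩ := unif hPM.triangleFn hε₁0
    obtain ⟨pn, hpnA, hconv⟩ := hp
    obtain ⟨n₀, hn₀⟩ := hconv δ hδ0
    have hGδ : 1 - δ < ρ p (pn n₀) δ := by
      rw [hPM.symm p (pn n₀)]; exact hn₀ n₀ le_rfl
    have key : ∀ q ∈ B', ρ (pn n₀) q (x - ε₁) - ε₁ ≤ ρ p q x := by
      intro q hq
      have hU := hδ (ρ p (pn n₀)) (ρ (pn n₀) q) (hPM.isDDF p (pn n₀))
        (hPM.isDDF (pn n₀) q) hGδ x hε₁inv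
      have htri : τ (ρ p (pn n₀)) (ρ (pn n₀) q) x ≤ ρ p q x := hPM.tri_ineq p (pn n₀) q x
      linarith
    have hstep : probDistToSet ρ (pn n₀) B' (x - ε₁) ≤ probDistToSet ρ p B' x + ε₁ := by
      refine probDist_le hPM hB' ?_
      intro q hq
      have := key q hq
      have := le_probDist hPM (p := p) hq x
      linarith
    calc gammaStar ρ A B' x' ≤ gammaStar ρ A B' (x - ε₁) :=
          gammaStar_mono_x hPM hA hB' (by linarith)
      _ ≤ probDistToSet ρ (pn n₀) B' (x - ε₁) := gammaStar_le' hPM hB' (hpnA n₀) _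
      _ ≤ probDistToSet ρ p B' x + ε₁ := hstep
      _ ≤ probDistToSet ρ p B' x + ε := by linarith

lemma fStar_SClosure (hPM : IsPMSpace ρ τ) {A B : Set L} (hA : A.Nonempty)
    (hB : B.Nonempty) : fStar ρ (SClosure ρ A) (SClosure ρ B) = fStar ρ A B := by
  have hclA := SClosure_nonempty hPM hA
  have hclB := SClosure_nonempty hPM hB
  funext x
  refine le_antisymm ?_ ?_
  · refine fStar_le hPM ?_
    intro x' hx'
    set x'' := (x' + x) / 2 with hx''def
    have h1 : x' < x'' := by rw [hx''def]; linarith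
    have h2 : x'' < x := by rw [hx''def]; linarith
    have step1 : gammaStar ρ (SClosure ρ A) (SClosure ρ B) x' ≤
        gammaStar ρ A (SClosure ρ B) x' :=
      le_gammaStar hPM _ hA (fun p hp =>
        gammaStar_le' hPM hclB (subset_SClosure hPM A hp) x')
    have step2 : gammaStar ρ A (SClosure ρ B) x' ≤ gammaStar ρ A B x'' :=
      le_gammaStar hPM _ hA (fun p hp =>
        le_trans (gammaStar_le' hPM hclB hp x') (probDist_SClosure_le hPM hB p h1))
    exact le_trans (le_trans step1 step2) (le_fStar hPM hA hB h2)
  · refine fStar_le hPM ?_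
    intro x' hx'
    set x'' := (x' + x) / 2 with hx''def
    have h1 : x' < x'' := by rw [hx''def]; linarith
    have h2 : x'' < x := by rw [hx''def]; linarith
    have step1 : gammaStar ρ A B x' ≤ gammaStar ρ A (SClosure ρ B) x' :=
      le_gammaStar hPM _ hA (fun p hp =>
        le_trans (gammaStar_le' hPM hB hp x')
          (probDist_mono_set hPM p hB (subset_SClosure hPM B) x'))
    have step2 : gammaStar ρ A (SClosure ρ B) x' ≤
        gammaStar ρ (SClosure ρ A) (SClosure ρ B) x'' :=
      le_gammaStar hPM _ hclA (fun p hp =>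
        gammaStar_le_probDist_SClosure hPM hA hclB h1 hp)
    exact le_trans (le_trans step1 step2) (le_fStar hPM hclA hclB h2)

end PMAux

/-- For nonempty subsets `A, B` of a PM space, `F_{AB} = F_{BA}` and
`F_{AB} = F_{cl(A) cl(B)}`, where `cl` is the closure in the strong topology. -/
theorem probHaus_symm_and_closure {L : Type*} (ρ : L → L → ℝ → ℝ)
    (τ : (ℝ → ℝ) → (ℝ → ℝ) → (ℝ → ℝ)) (hPM : IsPMSpace ρ τ)
    (A B : Set L) (hA : A.Nonempty) (hB : B.Nonempty) :
    probHaus ρ A B = probHaus ρ B A ∧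
    probHaus ρ A B = probHaus ρ (SClosure ρ A) (SClosure ρ B) := by
  constructor
  · funext x
    exact min_comm _ _
  · funext x
    show min (fStar ρ A B x) (fStar ρ B A x) =
      min (fStar ρ (SClosure ρ A) (SClosure ρ B) x) (fStar ρ (SClosure ρ B) (SClosure ρ A) x)
    rw [fStar_SClosure hPM hA hB, fStar_SClosure hPM hB hA]
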